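/- Let E be a real normed vector space, L : E × E → ℝ Fréchet differentiable, and ξ : E × E → E × E a Fréchet differentiable second-order map (pr₁ ∘ ξ = pr₂). Then ξ is a discrete Lagrangian evolution operator for L (i.e. D₂L(p) + D₁L(ξ(p)) = 0 for all p) if and only if the pullback of the Poincaré–Cartan 1-form Θ⁻_L by ξ equals Θ⁺_L, i.e. for every p ∈ E×E and every w ∈ E×E one has Θ⁻_L(ξ(p))(Dξ(p)(w)) = Θ⁺_L(p)(w). -/
import Mathlib


variable {E : Type*} [NormedAddCommGroup E] [NormedSpace ℝ E]

/-- The Fréchet derivative of `z ↦ L (z, y)` at `x`. -/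
noncomputable def D1 (L : E × E → ℝ) (x y : E) : E →L[ℝ] ℝ :=
  fderiv ℝ (fun z => L (z, y)) x

/-- The Fréchet derivative of `z ↦ L (x, z)` at `y`. -/
noncomputable def D2 (L : E × E → ℝ) (x y : E) : E →L[ℝ] ℝ :=
  fderiv ℝ (fun z => L (x, z)) y

/-- The discrete Poincaré–Cartan 1-form `Θ⁻_L(x,y)(u,v) = −D₁L(x,y)(u)`. -/
noncomputable def ThetaMinus (L : E × E → ℝ) (p w : E × E) : ℝ :=
  -(D1 L p.1 p.2 w.1)

/-- The discrete Poincaré–Cartan 1-form `Θ⁺_L(x,y)(u,v) = D₂L(x,y)(v)`. -/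
noncomputable def ThetaPlus (L : E × E → ℝ) (p w : E × E) : ℝ :=
  D2 L p.1 p.2 w.2

/-- A second-order map `ξ` is a discrete Lagrangian evolution operator for `L`
if and only if the pullback of `Θ⁻_L` by `ξ` equals `Θ⁺_L`. -/
theorem discreteEvolutionOperator_iff_pullback_thetaMinus_eq_thetaPlus
    (L : E × E → ℝ) (hL : Differentiable ℝ L)
    (ξ : E × E → E × E) (hξ : Differentiable ℝ ξ)
    (hso : ∀ p : E × E, (ξ p).1 = p.2) :
    (∀ p : E × E, D2 L p.1 p.2 + D1 L (ξ p).1 (ξ p).2 = 0)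
      ↔
    (∀ p w : E × E, ThetaMinus L (ξ p) (fderiv ℝ ξ p w) = ThetaPlus L p w) := by

  have h1 : ∀ p w : E × E, (fderiv ℝ ξ p w).1 = w.2 := by
    intro p w
    have hfd : HasFDerivAt (fun q => (ξ q).1)
        ((ContinuousLinearMap.fst ℝ E E).comp (fderiv ℝ ξ p)) p :=
      ((hξ p).hasFDerivAt).fst
    have heq : (fun q => (ξ q).1) = fun q : E × E => q.2 := funext hso
    rw [heq] at hfd
    have := hfd.fderiv
    rw [fderiv_snd] at this
    have h2 := congrArg (fun f : (E × E) →L[ℝ] E => f w) this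
    simpa using h2.symm
  constructor
  · intro h p w
    have hp := congrArg (fun f : E →L[ℝ] ℝ => f w.2) (h p)
    simp only [ContinuousLinearMap.add_apply, ContinuousLinearMap.zero_apply] at hp
    simp [ThetaMinus, ThetaPlus, h1]
    linarith
  · intro h p
    ext v
    have := h p (0, v)
    simp [ThetaMinus, ThetaPlus, h1] at this
    simp only [ContinuousLinearMap.add_apply, ContinuousLinearMap.zero_apply]
    linarith
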